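/- Let 1 ≤ q ≤ p < ∞, let φ : ℝ → ℝ be continuous with |φ(t)| ≤ C(1 + |t|^q) for some C > 0, and let v ∈ L^p([0,1]). With T_j v(x) = v(frac(jx)), the sequence φ(T_j v) = T_j(φ ∘ v) converges weakly in L^{p/q}([0,1]) (weakly-* in L^1 tested against L^∞ if p = q) to the constant ∫₀¹ φ(v(s)) ds: that is, for every ψ ∈ L^∞([0,1]), ∫₀¹ φ(v(frac(jx))) ψ(x) dx → (∫₀¹ φ(v(s)) ds)(∫₀¹ ψ dx). -/

import Mathlib

open Filter MeasureTheory Set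

lemma perInt {G : ℝ → ℝ} (hper : Function.Periodic G 1)
    (hGi : IntervalIntegrable G volume 0 1) (a b : ℝ) :
    IntervalIntegrable G volume a b := by
  have hk : ∀ k : ℤ, IntervalIntegrable G volume k (k + 1) := by
    intro k
    have h2 := hGi.comp_add_right (-k)
    have h3 : (fun x => G (x + -(k:ℝ))) = G := by
      funext x
      have := hper.sub_int_mul_eq (x := x) (n := k)
      simpa [sub_eq_add_neg] using this
    rw [h3] at h2
    simpa [add_comm] using h2
  have hn : ∀ n : ℕ, IntervalIntegrable G volume (-(n : ℝ)) n := by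
    intro n
    induction n with
    | zero => simp
    | succ m ih =>
      have hL := hk (-(m + 1) : ℤ)
      have hR := hk (m : ℤ)
      push_cast at hL hR
      have h1 : IntervalIntegrable G volume (-((m : ℝ) + 1)) (m : ℝ) :=
        (by simpa using hL : IntervalIntegrable G volume (-((m:ℝ)+1)) (-(m:ℝ))).trans ih
      have := h1.trans (by simpa using hR)
      push_cast
      simpa using this
  obtain ⟨n, hna⟩ := exists_nat_ge (max |a| |b|)
  refine (hn n).mono_set ?_
  rw [uIcc_of_le (by linarith [abs_nonneg a, le_max_left |a| |b|] : -(n:ℝ) ≤ n)]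
  apply uIcc_subset_Icc <;> constructor
  · linarith [abs_le.mp (le_trans (le_max_left |a| |b|) hna) |>.1] 
  · linarith [abs_le.mp (le_trans (le_max_left |a| |b|) hna) |>.2]
  · linarith [abs_le.mp (le_trans (le_max_right |a| |b|) hna) |>.1]
  · linarith [abs_le.mp (le_trans (le_max_right |a| |b|) hna) |>.2]

lemma oscNorm {G : ℝ → ℝ} (hper : Function.Periodic G 1)
    (hGi : IntervalIntegrable G volume 0 1) {j : ℕ} (hj : 1 ≤ j) :
    ∫ x in (0:ℝ)..1, G ((j:ℝ) * x) = ∫ u in (0:ℝ)..1, G u := by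
  have hj0 : (j : ℝ) ≠ 0 := by positivity
  rw [intervalIntegral.integral_comp_mul_left _ hj0]
  have h := hper.intervalIntegral_add_zsmul_eq (j : ℤ) 0 (perInt hper hGi)
  simp only [zero_add] at h
  rw [mul_zero, mul_one]
  rw [show ((j:ℝ)) = ((j : ℤ) • (1:ℝ)) by simp, h]
  simp only [zsmul_eq_mul, Int.cast_natCast, smul_eq_mul, mul_one]
  field_simp

lemma oscIdentity {G χ : ℝ → ℝ} (hper : Function.Periodic G 1)
    (hGi : IntervalIntegrable G volume 0 1) (hχ : Continuous χ) {j : ℕ} (hj : 1 ≤ j) :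
    ∫ x in (0:ℝ)..1, G ((j:ℝ) * x) * χ x
      = (j:ℝ)⁻¹ • ∑ k ∈ Finset.range j, ∫ u in (0:ℝ)..1, G u * χ ((u + k) / j) := by
  have hj0 : (j : ℝ) ≠ 0 := by positivity
  set F : ℝ → ℝ := fun y => G y * χ (y / j) with hF
  have hFint : ∀ a b : ℝ, IntervalIntegrable F volume a b := fun a b =>
    (perInt hper hGi a b).mul_continuousOn ((hχ.comp (continuous_id.div_const _)).continuousOn)
  have step1 : ∀ x : ℝ, G ((j:ℝ) * x) * χ x = F ((j:ℝ) * x) := by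
    intro x; simp [hF, mul_div_cancel_left₀ _ hj0]
  simp only [step1]
  rw [intervalIntegral.integral_comp_mul_left _ hj0, mul_zero, mul_one]
  congr 1
  have hsum := intervalIntegral.sum_integral_adjacent_intervals (μ := volume) (f := F)
    (a := fun k : ℕ => (k : ℝ)) (n := j) (fun k _ => hFint _ _)
  simp only [Nat.cast_zero] at hsum
  rw [← hsum]
  refine Finset.sum_congr rfl fun k _ => ?_
  have h1 : ∫ x in (0:ℝ)..1, F (x + (k:ℝ)) = ∫ x in ((0:ℝ)+k)..((1:ℝ)+k), F x :=
    intervalIntegral.integral_comp_add_right F (k:ℝ)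
  have h2 : ∫ x in ((k:ℝ))..((k:ℝ)+1), F x = ∫ x in (0:ℝ)..1, F (x + (k:ℝ)) := by
    rw [h1]; congr 1 <;> ring
  push_cast
  rw [h2]
  refine intervalIntegral.integral_congr fun u _ => ?_
  have hGk : G (u + (k:ℝ)) = G u := by
    simpa using (hper.nat_mul k) u
  simp [hF, hGk]

lemma riemann {χ : ℝ → ℝ} (hχ : Continuous χ) {ε : ℝ} (hε : 0 < ε) :
    ∃ N : ℕ, 1 ≤ N ∧ ∀ j : ℕ, N ≤ j → ∀ u ∈ Icc (0:ℝ) 1,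
      |(j:ℝ)⁻¹ * ∑ k ∈ Finset.range j, χ ((u + k) / j) - ∫ x in (0:ℝ)..1, χ x| ≤ ε := by
  have huc : UniformContinuousOn χ (Icc (0:ℝ) 1) :=
    isCompact_Icc.uniformContinuousOn_of_continuous hχ.continuousOn
  rw [Metric.uniformContinuousOn_iff] at huc
  obtain ⟨δ, hδ, hd⟩ := huc ε hε
  obtain ⟨N₀, hN₀⟩ := exists_nat_gt (1 / δ)
  refine ⟨max 1 N₀, le_max_left _ _, fun j hj u hu => ?_⟩
  have hj1 : 1 ≤ j := le_trans (le_max_left _ _) hj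
  have hjR : (0:ℝ) < j := by exact_mod_cast hj1
  have hj0 : (j:ℝ) ≠ 0 := ne_of_gt hjR
  have hjδ : 1 / (j:ℝ) < δ := by
    rw [div_lt_iff₀ hjR]
    have : (1:ℝ)/δ < j := lt_of_lt_of_le hN₀ (by exact_mod_cast le_trans (le_max_right _ _) hj)
    calc (1:ℝ) = δ * (1/δ) := by field_simp
    _ < δ * j := by exact mul_lt_mul_of_pos_left this hδ
  -- partition points
  have hsum := intervalIntegral.sum_integral_adjacent_intervals (μ := volume) (f := χ)
    (a := fun k : ℕ => (k : ℝ) / j) (n := j)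
    (fun k _ => hχ.intervalIntegrable _ _)
  simp only [Nat.cast_zero, zero_div, div_self hj0] at hsum
  have key : (j:ℝ)⁻¹ * ∑ k ∈ Finset.range j, χ ((u + k) / j) - ∫ x in (0:ℝ)..1, χ x
      = ∑ k ∈ Finset.range j,
          ∫ x in ((k:ℝ)/j)..(((k:ℝ)+1)/j), (χ ((u + k) / j) - χ x) := by
    rw [← hsum, Finset.mul_sum, ← Finset.sum_sub_distrib]
    refine Finset.sum_congr rfl fun k _ => ?_
    rw [intervalIntegral.integral_sub (intervalIntegrable_const) (hχ.intervalIntegrable _ _)]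
    push_cast
    congr 1
    rw [intervalIntegral.integral_const, smul_eq_mul]
    ring
  rw [key]
  have hbound : ∀ k ∈ Finset.range j,
      |∫ x in ((k:ℝ)/j)..(((k:ℝ)+1)/j), (χ ((u + k) / j) - χ x)| ≤ ε * (1/j) := by
    intro k hk
    have hkj : (k:ℝ) + 1 ≤ j := by exact_mod_cast Finset.mem_range.mp hk
    have hk0 : (0:ℝ) ≤ k := Nat.cast_nonneg k
    have hle : (k:ℝ)/j ≤ ((k:ℝ)+1)/j := (div_le_div_iff_of_pos_right hjR).mpr (by linarith)
    have habs : |((k:ℝ)+1)/j - (k:ℝ)/j| = 1/j := by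
      rw [abs_of_nonneg (by linarith)]; field_simp; ring
    rw [← habs, ← Real.norm_eq_abs]
    apply intervalIntegral.norm_integral_le_of_norm_le_const
    intro x hx
    rw [Real.norm_eq_abs, ← Real.dist_eq]
    rw [uIoc_of_le hle] at hx
    have hx1 : (k:ℝ)/j < x := hx.1
    have hx2 : x ≤ ((k:ℝ)+1)/j := hx.2
    have ht1 : (k:ℝ)/j ≤ (u + k)/j := (div_le_div_iff_of_pos_right hjR).mpr (by linarith [hu.1])
    have ht2 : (u + k)/j ≤ ((k:ℝ)+1)/j := (div_le_div_iff_of_pos_right hjR).mpr (by linarith [hu.2])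
    have hIcc : ∀ y : ℝ, (k:ℝ)/j ≤ y → y ≤ ((k:ℝ)+1)/j → y ∈ Icc (0:ℝ) 1 := by
      intro y h1 h2
      constructor
      · refine le_trans ?_ h1; positivity
      · refine le_trans h2 ?_; rw [div_le_one hjR]; linarith
    have h1j : ((k:ℝ)+1)/j - (k:ℝ)/j = 1/j := by field_simp; ring
    have hdist : dist ((u + k)/j) x < δ := by
      rw [Real.dist_eq]
      refine lt_of_le_of_lt ?_ hjδ
      rw [abs_le]
      constructor <;> linarith
    exact le_of_lt (hd _ (hIcc _ ht1 ht2) _ (hIcc _ (le_of_lt hx1) hx2) hdist)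
  calc |∑ k ∈ Finset.range j, ∫ x in ((k:ℝ)/j)..(((k:ℝ)+1)/j), (χ ((u + k) / j) - χ x)|
      ≤ ∑ k ∈ Finset.range j, |∫ x in ((k:ℝ)/j)..(((k:ℝ)+1)/j), (χ ((u + k) / j) - χ x)| :=
        Finset.abs_sum_le_sum_abs _ _
    _ ≤ ∑ _k ∈ Finset.range j, ε * (1/j) := Finset.sum_le_sum hbound
    _ = ε := by rw [Finset.sum_const, Finset.card_range, nsmul_eq_mul]; field_simp

lemma oscConv {G χ : ℝ → ℝ} (hper : Function.Periodic G 1)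
    (hGi : IntervalIntegrable G volume 0 1) (hχ : Continuous χ) :
    Tendsto (fun j : ℕ => ∫ x in (0:ℝ)..1, G ((j:ℝ) * x) * χ x) atTop
      (nhds ((∫ u in (0:ℝ)..1, G u) * ∫ x in (0:ℝ)..1, χ x)) := by
  rw [Metric.tendsto_atTop]
  intro ε hε
  set I := ∫ u in (0:ℝ)..1, ‖G u‖ with hI
  have hI0 : 0 ≤ I := intervalIntegral.integral_nonneg zero_le_one (fun u _ => norm_nonneg _)
  have hε' : 0 < ε / (2 * (I + 1)) := by positivity
  obtain ⟨N, hN1, hNp⟩ := riemann hχ hε'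
  refine ⟨N, fun j hj => ?_⟩
  have hj1 : 1 ≤ j := le_trans hN1 hj
  have hjR : (0:ℝ) < j := by exact_mod_cast hj1
  set c := ∫ x in (0:ℝ)..1, χ x with hc
  set A : ℝ → ℝ := fun u => (j:ℝ)⁻¹ * ∑ k ∈ Finset.range j, χ ((u + k) / j) with hA
  have hAcont : Continuous A := by
    apply continuous_const.mul
    exact continuous_finset_sum _ fun k _ => hχ.comp ((continuous_id.add continuous_const).div_const _)
  have hint : ∀ k : ℕ, IntervalIntegrable (fun u => G u * χ ((u + (k:ℝ)) / j)) volume 0 1 :=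
    fun k => hGi.mul_continuousOn (Continuous.continuousOn (by fun_prop))
  have hstep : ∫ x in (0:ℝ)..1, G ((j:ℝ) * x) * χ x = ∫ u in (0:ℝ)..1, G u * A u := by
    rw [oscIdentity hper hGi hχ hj1]
    have hsum2 : ∑ k ∈ Finset.range j, ∫ u in (0:ℝ)..1, G u * χ ((u + (k:ℝ)) / j)
        = ∫ u in (0:ℝ)..1, ∑ k ∈ Finset.range j, G u * χ ((u + (k:ℝ)) / j) :=
      (intervalIntegral.integral_finset_sum (fun k _ => hint k)).symm
    rw [hsum2, ← intervalIntegral.integral_smul]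
    refine intervalIntegral.integral_congr fun u _ => ?_
    simp only [hA, smul_eq_mul, Finset.mul_sum]
    refine Finset.sum_congr rfl fun k _ => by ring
  rw [hstep]
  have hconst : (∫ u in (0:ℝ)..1, G u) * c = ∫ u in (0:ℝ)..1, G u * c :=
    (intervalIntegral.integral_mul_const c G).symm
  rw [Real.dist_eq, hconst]
  have hsub : (∫ u in (0:ℝ)..1, G u * A u) - ∫ u in (0:ℝ)..1, G u * c
      = ∫ u in (0:ℝ)..1, (G u * A u - G u * c) := by
    rw [intervalIntegral.integral_sub (hGi.mul_continuousOn hAcont.continuousOn)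
      (hGi.mul_const c)]
  rw [hsub, ← Real.norm_eq_abs]
  have hbd : ‖∫ u in (0:ℝ)..1, (G u * A u - G u * c)‖
      ≤ |∫ u in (0:ℝ)..1, ‖G u‖ * (ε / (2 * (I + 1)))| := by
    apply intervalIntegral.norm_integral_le_abs_of_norm_le
    · refine (ae_restrict_iff' measurableSet_uIoc).mpr (Filter.Eventually.of_forall fun t ht => ?_)
      rw [uIoc_of_le zero_le_one] at ht
      have htIcc : t ∈ Icc (0:ℝ) 1 := ⟨le_of_lt ht.1, ht.2⟩
      have := hNp j hj t htIcc
      have heq : G t * A t - G t * c = G t * (A t - c) := by ring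
      rw [heq, Real.norm_eq_abs, abs_mul]
      exact mul_le_mul_of_nonneg_left this (abs_nonneg _)
    · exact (hGi.norm).mul_const _
  have hval : ∫ u in (0:ℝ)..1, ‖G u‖ * (ε / (2 * (I + 1))) = I * (ε / (2 * (I + 1))) :=
    intervalIntegral.integral_mul_const _ _
  rw [hval] at hbd
  refine lt_of_le_of_lt hbd ?_
  rw [abs_of_nonneg (by positivity)]
  have h2 : I * (ε / (2 * (I + 1))) ≤ (I + 1) * (ε / (2 * (I + 1))) :=
    mul_le_mul_of_nonneg_right (by linarith) hε'.le
  have h3 : (I + 1) * (ε / (2 * (I + 1))) = ε / 2 := by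
    have hne : I + 1 ≠ 0 := by positivity
    field_simp
  linarith

lemma oscWeak {G ψ : ℝ → ℝ} (hper : Function.Periodic G 1)
    (hGi : IntervalIntegrable G volume 0 1)
    (hψi : IntegrableOn ψ (Ioc (0:ℝ) 1))
    {M : ℝ} (hM0 : 0 ≤ M)
    (hM : ∀ᵐ x ∂(volume.restrict (Ioc (0:ℝ) 1)), ‖ψ x‖ ≤ M) :
    Tendsto (fun j : ℕ => ∫ x in (0:ℝ)..1, G ((j:ℝ) * x) * ψ x) atTop
      (nhds ((∫ u in (0:ℝ)..1, G u) * ∫ x in (0:ℝ)..1, ψ x)) := by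
  have hIoc : IntegrableOn G (Ioc (0:ℝ) 1) volume :=
    (intervalIntegrable_iff_integrableOn_Ioc_of_le zero_le_one).mp hGi
  have hae1 : ∀ᵐ x ∂(volume.restrict (Ioc (0:ℝ) 1)), x ≠ (1:ℝ) := by
    rw [ae_iff]
    have h0 : (volume.restrict (Ioc (0:ℝ) 1)) {(1:ℝ)} = 0 := by
      rw [Measure.restrict_apply (measurableSet_singleton 1)]
      exact measure_mono_null inter_subset_left Real.volume_singleton
    convert h0 using 2
    ext x; simp [not_not]
  rw [Metric.tendsto_atTop]
  intro ε hε
  set ε₁ := ε / (8 * (M + 1)) with hε₁def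
  have hε₁ : 0 < ε₁ := by positivity
  -- approximate G by a continuous function h
  have hg₁ : Integrable ((Ioc (0:ℝ) 1).indicator G) volume :=
    (integrable_indicator_iff measurableSet_Ioc).mpr hIoc
  obtain ⟨h, -, hhL1, hhcont, hhInt⟩ := hg₁.exists_hasCompactSupport_integral_sub_le hε₁
  set H : ℝ → ℝ := fun y => h (Int.fract y) with hHdef
  have hHper : Function.Periodic H 1 := fun y => by simp [hHdef, Int.fract_add_one]
  have hHae : H =ᵐ[volume.restrict (Ioc (0:ℝ) 1)] h := by
    filter_upwards [hae1, ae_restrict_mem measurableSet_Ioc] with x hne hx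
    have : Int.fract x = x := Int.fract_eq_self.mpr ⟨le_of_lt hx.1, lt_of_le_of_ne hx.2 hne⟩
    simp [hHdef, this]
  have hHIoc : IntegrableOn H (Ioc (0:ℝ) 1) volume :=
    (hhInt.integrableOn).congr hHae.symm
  have hHi : IntervalIntegrable H volume 0 1 :=
    (intervalIntegrable_iff_integrableOn_Ioc_of_le zero_le_one).mpr hHIoc
  obtain ⟨K, hK⟩ := (isCompact_Icc (a := (0:ℝ)) (b := 1)).exists_bound_of_continuousOn
    hhcont.continuousOn
  have hK0 : 0 ≤ K := le_trans (norm_nonneg (h 0)) (hK 0 (by norm_num))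
  have hHbd : ∀ y, ‖H y‖ ≤ K := fun y =>
    hK _ ⟨Int.fract_nonneg y, (Int.fract_lt_one y).le⟩
  -- L¹ distance between G and H on (0,1]
  have hδG : ∫ u in (0:ℝ)..1, ‖G u - H u‖ ≤ ε₁ := by
    rw [intervalIntegral.integral_of_le zero_le_one]
    have heq : ∫ u in Ioc (0:ℝ) 1, ‖G u - H u‖
        = ∫ u in Ioc (0:ℝ) 1, ‖(Ioc (0:ℝ) 1).indicator G u - h u‖ := by
      refine integral_congr_ae ?_
      filter_upwards [hHae, ae_restrict_mem measurableSet_Ioc] with x hx hmem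
      rw [hx, indicator_of_mem hmem]
    rw [heq]
    refine le_trans (setIntegral_le_integral ((hg₁.sub hhInt).norm) ?_) hhL1
    exact Filter.Eventually.of_forall fun x => norm_nonneg _
  set ε₂ := ε / (8 * (K + 1)) with hε₂def
  have hε₂ : 0 < ε₂ := by positivity
  -- approximate ψ by a continuous function χ
  have hψ₁ : Integrable ((Ioc (0:ℝ) 1).indicator ψ) volume :=
    (integrable_indicator_iff measurableSet_Ioc).mpr hψi
  obtain ⟨χ, -, hχL1, hχcont, hχInt⟩ := hψ₁.exists_hasCompactSupport_integral_sub_le hε₂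
  have hδψ : ∫ x in (0:ℝ)..1, ‖ψ x - χ x‖ ≤ ε₂ := by
    rw [intervalIntegral.integral_of_le zero_le_one]
    have heq : ∫ u in Ioc (0:ℝ) 1, ‖ψ u - χ u‖
        = ∫ u in Ioc (0:ℝ) 1, ‖(Ioc (0:ℝ) 1).indicator ψ u - χ u‖ := by
      refine integral_congr_ae ?_
      filter_upwards [ae_restrict_mem measurableSet_Ioc] with x hmem
      rw [indicator_of_mem hmem]
    rw [heq]
    refine le_trans (setIntegral_le_integral ((hψ₁.sub hχInt).norm) ?_) hχL1
    exact Filter.Eventually.of_forall fun x => norm_nonneg _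
  have hχi : IntervalIntegrable χ volume 0 1 := hχcont.intervalIntegrable _ _
  -- convergence in the smooth case
  have hconv := oscConv hHper hHi hχcont
  rw [Metric.tendsto_atTop] at hconv
  obtain ⟨N₃, hN₃⟩ := hconv (ε / 8) (by positivity)
  refine ⟨max N₃ 1, fun j hj => ?_⟩
  have hj1 : 1 ≤ j := le_trans (le_max_right _ _) hj
  have hjN : N₃ ≤ j := le_trans (le_max_left _ _) hj
  have hjR : (0:ℝ) < j := by exact_mod_cast hj1
  have hj0 : (j:ℝ) ≠ 0 := ne_of_gt hjR
  -- integrability of the various integrands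
  have hcomp : ∀ {F : ℝ → ℝ}, Function.Periodic F 1 → IntervalIntegrable F volume 0 1 →
      IntervalIntegrable (fun x => F ((j:ℝ) * x)) volume 0 1 := by
    intro F hFper hFi
    have := (perInt hFper hFi 0 (j:ℝ)).comp_mul_left (c := (j:ℝ))
    simpa [div_self hj0] using this
  have hGj : IntervalIntegrable (fun x => G ((j:ℝ) * x)) volume 0 1 := hcomp hper hGi
  have hHj : IntervalIntegrable (fun x => H ((j:ℝ) * x)) volume 0 1 := hcomp hHper hHi
  have hGjIoc : IntegrableOn (fun x => G ((j:ℝ) * x)) (Ioc (0:ℝ) 1) volume :=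
    (intervalIntegrable_iff_integrableOn_Ioc_of_le zero_le_one).mp hGj
  have hHjIoc : IntegrableOn (fun x => H ((j:ℝ) * x)) (Ioc (0:ℝ) 1) volume :=
    (intervalIntegrable_iff_integrableOn_Ioc_of_le zero_le_one).mp hHj
  have hmul : ∀ {F : ℝ → ℝ}, IntegrableOn F (Ioc (0:ℝ) 1) volume →
      IntegrableOn (fun x => F x * ψ x) (Ioc (0:ℝ) 1) volume := by
    intro F hF
    refine Integrable.mono' (hF.norm.mul_const M) (hF.aestronglyMeasurable.mul
      hψi.aestronglyMeasurable) ?_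
    filter_upwards [hM] with x hx
    rw [norm_mul]
    exact mul_le_mul_of_nonneg_left hx (norm_nonneg _)
  have I1 : IntervalIntegrable (fun x => G ((j:ℝ) * x) * ψ x) volume 0 1 :=
    (intervalIntegrable_iff_integrableOn_Ioc_of_le zero_le_one).mpr (hmul hGjIoc)
  have I2 : IntervalIntegrable (fun x => H ((j:ℝ) * x) * ψ x) volume 0 1 :=
    (intervalIntegrable_iff_integrableOn_Ioc_of_le zero_le_one).mpr (hmul hHjIoc)
  have hψj : IntervalIntegrable ψ volume 0 1 :=
    (intervalIntegrable_iff_integrableOn_Ioc_of_le zero_le_one).mpr hψi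
  -- T1
  have hDper : Function.Periodic (fun u => ‖G u - H u‖) 1 := fun u => by
    simp [hper u, hHper u]
  have hDi : IntervalIntegrable (fun u => ‖G u - H u‖) volume 0 1 := (hGi.sub hHi).norm
  have hT1 : |(∫ x in (0:ℝ)..1, G ((j:ℝ) * x) * ψ x)
      - ∫ x in (0:ℝ)..1, H ((j:ℝ) * x) * ψ x| ≤ M * ε₁ := by
    rw [← intervalIntegral.integral_sub I1 I2, ← Real.norm_eq_abs]
    have hb : IntervalIntegrable (fun x => ‖G ((j:ℝ) * x) - H ((j:ℝ) * x)‖ * M) volume 0 1 :=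
      (hGj.sub hHj).norm.mul_const M
    refine le_trans (intervalIntegral.norm_integral_le_abs_of_norm_le ?_ hb) ?_
    · rw [uIoc_of_le zero_le_one]
      filter_upwards [hM] with x hx
      have : G ((j:ℝ) * x) * ψ x - H ((j:ℝ) * x) * ψ x
          = (G ((j:ℝ) * x) - H ((j:ℝ) * x)) * ψ x := by ring
      rw [this, norm_mul]
      exact mul_le_mul_of_nonneg_left hx (norm_nonneg _)
    · have hval : ∫ x in (0:ℝ)..1, ‖G ((j:ℝ) * x) - H ((j:ℝ) * x)‖ * M
          = (∫ x in (0:ℝ)..1, ‖G ((j:ℝ) * x) - H ((j:ℝ) * x)‖) * M :=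
        intervalIntegral.integral_mul_const _ _
      have hosc : ∫ x in (0:ℝ)..1, ‖G ((j:ℝ) * x) - H ((j:ℝ) * x)‖
          = ∫ u in (0:ℝ)..1, ‖G u - H u‖ := oscNorm hDper hDi hj1
      rw [hval, hosc, abs_of_nonneg (mul_nonneg
        (intervalIntegral.integral_nonneg zero_le_one fun u _ => norm_nonneg _) hM0)]
      rw [mul_comm]
      exact mul_le_mul_of_nonneg_left hδG hM0
  -- T2
  have I3 : IntervalIntegrable (fun x => H ((j:ℝ) * x) * χ x) volume 0 1 :=
    hHj.mul_continuousOn hχcont.continuousOn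
  have hT2 : |(∫ x in (0:ℝ)..1, H ((j:ℝ) * x) * ψ x)
      - ∫ x in (0:ℝ)..1, H ((j:ℝ) * x) * χ x| ≤ K * ε₂ := by
    rw [← intervalIntegral.integral_sub I2 I3, ← Real.norm_eq_abs]
    have hb : IntervalIntegrable (fun x => K * ‖ψ x - χ x‖) volume 0 1 :=
      (hψj.sub hχi).norm.const_mul K
    refine le_trans (intervalIntegral.norm_integral_le_abs_of_norm_le ?_ hb) ?_
    · rw [uIoc_of_le zero_le_one]
      refine Filter.Eventually.of_forall fun x => ?_
      have : H ((j:ℝ) * x) * ψ x - H ((j:ℝ) * x) * χ x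
          = H ((j:ℝ) * x) * (ψ x - χ x) := by ring
      rw [this, norm_mul]
      exact mul_le_mul_of_nonneg_right (hHbd _) (norm_nonneg _)
    · have hval : ∫ x in (0:ℝ)..1, K * ‖ψ x - χ x‖
          = K * ∫ x in (0:ℝ)..1, ‖ψ x - χ x‖ := intervalIntegral.integral_const_mul _ _
      rw [hval, abs_of_nonneg (mul_nonneg hK0
        (intervalIntegral.integral_nonneg zero_le_one fun u _ => norm_nonneg _))]
      exact mul_le_mul_of_nonneg_left hδψ hK0
  -- T3
  have hT3 : |(∫ x in (0:ℝ)..1, H ((j:ℝ) * x) * χ x)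
      - (∫ u in (0:ℝ)..1, H u) * ∫ x in (0:ℝ)..1, χ x| < ε / 8 := by
    have := hN₃ j hjN
    rwa [Real.dist_eq] at this
  -- T4
  have hIH : |∫ u in (0:ℝ)..1, H u| ≤ K := by
    rw [← Real.norm_eq_abs]
    refine le_trans (intervalIntegral.norm_integral_le_of_norm_le_const
      (fun x _ => hHbd x)) (by norm_num)
  have hIψ : |∫ x in (0:ℝ)..1, ψ x| ≤ M := by
    rw [← Real.norm_eq_abs]
    refine le_trans (intervalIntegral.norm_integral_le_abs_of_norm_le ?_
      (intervalIntegrable_const (c := M))) (by simp [abs_of_nonneg hM0])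
    rw [uIoc_of_le zero_le_one]
    exact hM
  have hIsub1 : |(∫ x in (0:ℝ)..1, χ x) - ∫ x in (0:ℝ)..1, ψ x| ≤ ε₂ := by
    rw [← intervalIntegral.integral_sub hχi hψj, ← Real.norm_eq_abs]
    refine le_trans (intervalIntegral.norm_integral_le_abs_of_norm_le ?_ (hψj.sub hχi).norm) ?_
    · refine Filter.Eventually.of_forall fun x => ?_
      rw [norm_sub_rev]
    · rwa [abs_of_nonneg (intervalIntegral.integral_nonneg zero_le_one
        fun u _ => norm_nonneg _)]
  have hIsub2 : |(∫ u in (0:ℝ)..1, H u) - ∫ u in (0:ℝ)..1, G u| ≤ ε₁ := by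
    rw [← intervalIntegral.integral_sub hHi hGi, ← Real.norm_eq_abs]
    refine le_trans (intervalIntegral.norm_integral_le_abs_of_norm_le ?_ (hGi.sub hHi).norm) ?_
    · refine Filter.Eventually.of_forall fun x => ?_
      rw [norm_sub_rev]
    · rwa [abs_of_nonneg (intervalIntegral.integral_nonneg zero_le_one
        fun u _ => norm_nonneg _)]
  have hT4 : |(∫ u in (0:ℝ)..1, H u) * (∫ x in (0:ℝ)..1, χ x)
      - (∫ u in (0:ℝ)..1, G u) * ∫ x in (0:ℝ)..1, ψ x| ≤ K * ε₂ + ε₁ * M := by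
    have hsplit : (∫ u in (0:ℝ)..1, H u) * (∫ x in (0:ℝ)..1, χ x)
        - (∫ u in (0:ℝ)..1, G u) * ∫ x in (0:ℝ)..1, ψ x
        = (∫ u in (0:ℝ)..1, H u) * ((∫ x in (0:ℝ)..1, χ x) - ∫ x in (0:ℝ)..1, ψ x)
          + ((∫ u in (0:ℝ)..1, H u) - ∫ u in (0:ℝ)..1, G u) * ∫ x in (0:ℝ)..1, ψ x := by
      ring
    rw [hsplit]
    refine le_trans (abs_add_le _ _) (add_le_add ?_ ?_)
    · rw [abs_mul]
      exact mul_le_mul hIH hIsub1 (abs_nonneg _) hK0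
    · rw [abs_mul]
      exact mul_le_mul hIsub2 hIψ (abs_nonneg _) hε₁.le
  -- combine
  rw [Real.dist_eq]
  have hchain : (∫ x in (0:ℝ)..1, G ((j:ℝ) * x) * ψ x)
      - (∫ u in (0:ℝ)..1, G u) * ∫ x in (0:ℝ)..1, ψ x
      = ((∫ x in (0:ℝ)..1, G ((j:ℝ) * x) * ψ x) - ∫ x in (0:ℝ)..1, H ((j:ℝ) * x) * ψ x)
      + ((∫ x in (0:ℝ)..1, H ((j:ℝ) * x) * ψ x) - ∫ x in (0:ℝ)..1, H ((j:ℝ) * x) * χ x)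
      + ((∫ x in (0:ℝ)..1, H ((j:ℝ) * x) * χ x)
          - (∫ u in (0:ℝ)..1, H u) * ∫ x in (0:ℝ)..1, χ x)
      + ((∫ u in (0:ℝ)..1, H u) * (∫ x in (0:ℝ)..1, χ x)
          - (∫ u in (0:ℝ)..1, G u) * ∫ x in (0:ℝ)..1, ψ x) := by ring
  have hMε : M * ε₁ ≤ ε / 8 := by
    have h2 : M * ε₁ ≤ (M + 1) * ε₁ := mul_le_mul_of_nonneg_right (by linarith) hε₁.le
    have h3 : (M + 1) * ε₁ = ε / 8 := by
      rw [hε₁def]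
      have hne : M + 1 ≠ 0 := by positivity
      field_simp
    linarith
  have hKε : K * ε₂ ≤ ε / 8 := by
    have h2 : K * ε₂ ≤ (K + 1) * ε₂ := mul_le_mul_of_nonneg_right (by linarith) hε₂.le
    have h3 : (K + 1) * ε₂ = ε / 8 := by
      rw [hε₂def]
      have hne : K + 1 ≠ 0 := by positivity
      field_simp
    linarith
  have hε₁M : ε₁ * M ≤ ε / 8 := by rw [mul_comm]; exact hMε
  calc |(∫ x in (0:ℝ)..1, G ((j:ℝ) * x) * ψ x)
      - (∫ u in (0:ℝ)..1, G u) * ∫ x in (0:ℝ)..1, ψ x|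
      ≤ |(∫ x in (0:ℝ)..1, G ((j:ℝ) * x) * ψ x) - ∫ x in (0:ℝ)..1, H ((j:ℝ) * x) * ψ x|
      + |(∫ x in (0:ℝ)..1, H ((j:ℝ) * x) * ψ x) - ∫ x in (0:ℝ)..1, H ((j:ℝ) * x) * χ x|
      + |(∫ x in (0:ℝ)..1, H ((j:ℝ) * x) * χ x)
          - (∫ u in (0:ℝ)..1, H u) * ∫ x in (0:ℝ)..1, χ x|
      + |(∫ u in (0:ℝ)..1, H u) * (∫ x in (0:ℝ)..1, χ x)
          - (∫ u in (0:ℝ)..1, G u) * ∫ x in (0:ℝ)..1, ψ x| := by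
        rw [hchain]
        exact le_trans (abs_add_le _ _) (add_le_add (le_trans (abs_add_le _ _)
          (add_le_add (abs_add_le _ _) le_rfl)) le_rfl)
    _ < ε := by linarith

theorem stmt8 (p q : ℝ) (hq : 1 ≤ q) (hqp : q ≤ p)
    (φ : ℝ → ℝ) (hφ : Continuous φ) (C : ℝ) (hC : 0 < C)
    (hgrowth : ∀ t : ℝ, |φ t| ≤ C * (1 + |t| ^ q))
    (v : ℝ → ℝ) (hv : MemLp v (ENNReal.ofReal p) (volume.restrict (Icc (0:ℝ) 1)))
    (ψ : ℝ → ℝ) (hψ : MemLp ψ ⊤ (volume.restrict (Icc (0:ℝ) 1))) :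
    Tendsto (fun j : ℕ => ∫ x in Icc (0:ℝ) 1, φ (v (Int.fract (j * x))) * ψ x)
      atTop (nhds ((∫ s in Icc (0:ℝ) 1, φ (v s)) * ∫ x in Icc (0:ℝ) 1, ψ x)) := by
  haveI : IsFiniteMeasure (volume.restrict (Icc (0:ℝ) 1)) :=
    ⟨by rw [Measure.restrict_apply_univ]; simp⟩
  -- the function g = φ ∘ v is integrable on [0,1]
  set g : ℝ → ℝ := fun s => φ (v s) with hgdef
  have hq0 : (0:ℝ) ≤ q := le_trans zero_le_one hq
  have hvq : MemLp v (ENNReal.ofReal q) (volume.restrict (Icc (0:ℝ) 1)) :=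
    hv.mono_exponent (ENNReal.ofReal_le_ofReal hqp)
  have hVq : Integrable (fun x => ‖v x‖ ^ q) (volume.restrict (Icc (0:ℝ) 1)) := by
    have := hvq.integrable_norm_rpow (by simp [ENNReal.ofReal_eq_zero]; linarith)
      (by simp)
    simpa [ENNReal.toReal_ofReal hq0] using this
  have hg : IntegrableOn g (Icc (0:ℝ) 1) volume := by
    refine Integrable.mono' (((integrable_const (1:ℝ)).add hVq).const_mul C)
      (hφ.comp_aestronglyMeasurable hv.aestronglyMeasurable) ?_
    refine Filter.Eventually.of_forall fun x => ?_
    have := hgrowth (v x)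
    simpa [hgdef, Real.norm_eq_abs] using this
  -- its periodization G
  set G : ℝ → ℝ := fun y => g (Int.fract y) with hGdef
  have hper : Function.Periodic G 1 := fun y => by simp [hGdef, Int.fract_add_one]
  have hae1 : ∀ᵐ x ∂(volume.restrict (Ioc (0:ℝ) 1)), x ≠ (1:ℝ) := by
    rw [ae_iff]
    have h0 : (volume.restrict (Ioc (0:ℝ) 1)) {(1:ℝ)} = 0 := by
      rw [Measure.restrict_apply (measurableSet_singleton 1)]
      exact measure_mono_null inter_subset_left Real.volume_singleton
    convert h0 using 2
    ext x; simp [not_not]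
  have hGae : G =ᵐ[volume.restrict (Ioc (0:ℝ) 1)] g := by
    filter_upwards [hae1, ae_restrict_mem measurableSet_Ioc] with x hne hx
    have : Int.fract x = x := Int.fract_eq_self.mpr ⟨le_of_lt hx.1, lt_of_le_of_ne hx.2 hne⟩
    simp [hGdef, this]
  have hgIoc : IntegrableOn g (Ioc (0:ℝ) 1) volume := hg.mono_set Ioc_subset_Icc_self
  have hGi : IntervalIntegrable G volume 0 1 :=
    (intervalIntegrable_iff_integrableOn_Ioc_of_le zero_le_one).mpr (hgIoc.congr hGae.symm)
  -- ψ is essentially bounded and integrable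
  set M : ℝ := (eLpNorm ψ ⊤ (volume.restrict (Icc (0:ℝ) 1))).toReal with hMdef
  have hM0 : 0 ≤ M := ENNReal.toReal_nonneg
  have hMtop : eLpNorm ψ ⊤ (volume.restrict (Icc (0:ℝ) 1)) ≠ ⊤ := hψ.2.ne
  have hMIcc : ∀ᵐ x ∂(volume.restrict (Icc (0:ℝ) 1)), ‖ψ x‖ ≤ M := by
    have h := ae_le_eLpNormEssSup (f := ψ) (μ := volume.restrict (Icc (0:ℝ) 1))
    filter_upwards [h] with x hx
    have hx' : (‖ψ x‖ₑ : ENNReal) ≤ eLpNorm ψ ⊤ (volume.restrict (Icc (0:ℝ) 1)) := by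
      rwa [eLpNorm_exponent_top]
    have := ENNReal.toReal_mono hMtop hx'
    simpa [hMdef] using this
  have hMIoc : ∀ᵐ x ∂(volume.restrict (Ioc (0:ℝ) 1)), ‖ψ x‖ ≤ M :=
    ae_restrict_of_ae_restrict_of_subset Ioc_subset_Icc_self hMIcc
  have hψint : IntegrableOn ψ (Icc (0:ℝ) 1) volume := by
    have := hψ.mono_exponent (le_top : (1:ENNReal) ≤ ⊤)
    exact memLp_one_iff_integrable.mp this
  have hψIoc : IntegrableOn ψ (Ioc (0:ℝ) 1) volume := hψint.mono_set Ioc_subset_Icc_self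
  -- rewrite everything as interval integrals and apply oscWeak
  have hkey := oscWeak hper hGi hψIoc hM0 hMIoc
  have heq1 : ∀ j : ℕ, (∫ x in Icc (0:ℝ) 1, φ (v (Int.fract (j * x))) * ψ x)
      = ∫ x in (0:ℝ)..1, G ((j:ℝ) * x) * ψ x := by
    intro j
    rw [integral_Icc_eq_integral_Ioc, intervalIntegral.integral_of_le zero_le_one]
  have heq2 : (∫ s in Icc (0:ℝ) 1, φ (v s)) = ∫ u in (0:ℝ)..1, G u := by
    rw [integral_Icc_eq_integral_Ioc, intervalIntegral.integral_of_le zero_le_one]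
    exact integral_congr_ae hGae.symm
  have heq3 : (∫ x in Icc (0:ℝ) 1, ψ x) = ∫ x in (0:ℝ)..1, ψ x := by
    rw [integral_Icc_eq_integral_Ioc, intervalIntegral.integral_of_le zero_le_one]
  rw [heq2, heq3]
  exact hkey.congr (fun j => (heq1 j).symm)
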